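/- Let m = 2^r(2^ℓ+1) with r ≥ 2, ℓ ≥ 1, let q = 2^n, and let α ∈ 𝔽_q be nonzero. Every root z (in an algebraic closure of 𝔽_2) of the polynomial x^(m-2) + (x+α)^(m-2) is nonzero and has the form z = α/(1+θ) for some (m/2 - 1)-th root of unity θ ≠ 1, and conversely every such z is a root. In particular x^(m-2)+(x+α)^(m-2) has exactly m/2 - 2 distinct roots counted as elements of the algebraic closure. -/

import Mathlib

open Polynomial

theorem roots_of_Dalpha_monomial (n r ℓ : ℕ) (hn : 0 < n) (hr : 2 ≤ r) (hℓ : 1 ≤ ℓ)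
    (m : ℕ) (hm : m = 2 ^ r * (2 ^ ℓ + 1))
    (α : GaloisField 2 n) (hα : α ≠ 0) :
    (∀ z : AlgebraicClosure (GaloisField 2 n),
        z ^ (m - 2) + (z + algebraMap (GaloisField 2 n)
            (AlgebraicClosure (GaloisField 2 n)) α) ^ (m - 2) = 0 ↔
          (z ≠ 0 ∧ ∃ θ : AlgebraicClosure (GaloisField 2 n),
            θ ^ (m / 2 - 1) = 1 ∧ θ ≠ 1 ∧
              z = algebraMap (GaloisField 2 n)
                (AlgebraicClosure (GaloisField 2 n)) α / (1 + θ))) ∧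
      Set.ncard {z : AlgebraicClosure (GaloisField 2 n) |
          z ^ (m - 2) + (z + algebraMap (GaloisField 2 n)
            (AlgebraicClosure (GaloisField 2 n)) α) ^ (m - 2) = 0} =
        m / 2 - 2 := by
  classical
  set K := AlgebraicClosure (GaloisField 2 n)
  set A : K := algebraMap (GaloisField 2 n) K α with hA_def
  have hA : A ≠ 0 := by
    simpa [hA_def] using (map_ne_zero (algebraMap (GaloisField 2 n) K)).mpr hα
  haveI : CharP K 2 := charP_of_injective_algebraMap
    (algebraMap (GaloisField 2 n) K).injective 2
  have htwo : (2 : K) = 0 := by exact_mod_cast CharP.cast_eq_zero K 2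
  -- arithmetic on m
  have h4 : 4 ∣ m := by
    rw [hm]
    exact Dvd.dvd.mul_right (by exact pow_dvd_pow 2 hr) _
  have h12 : 12 ≤ m := by
    rw [hm]
    calc (12 : ℕ) = 4 * 3 := rfl
    _ ≤ 2 ^ r * (2 ^ ℓ + 1) := by
        refine Nat.mul_le_mul ?_ ?_
        · calc (4:ℕ) = 2 ^ 2 := rfl
          _ ≤ 2 ^ r := Nat.pow_le_pow_right (by norm_num) hr
        · have : (2:ℕ) ^ 1 ≤ 2 ^ ℓ := Nat.pow_le_pow_right (by norm_num) hℓ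
          omega
  set k := m / 2 - 1 with hk_def
  have hmk : m - 2 = 2 * k := by omega
  have hkpos : 0 < k := by omega
  have hkodd : ¬ (2 ∣ k) := by omega
  -- key: a + b = 0 ↔ a = b in char 2
  have char2_add : ∀ a b : K, a + b = 0 ↔ a = b := by
    intro a b
    constructor
    · intro h; linear_combination h - b * htwo
    · intro h; linear_combination h + b * htwo
  have sq_inj : ∀ a b : K, a ^ 2 = b ^ 2 → a = b := by
    intro a b h
    have h0 : (a + b) ^ 2 = 0 := by linear_combination h + (a * b + b * b) * htwo
    exact (char2_add a b).mp (pow_eq_zero_iff (n := 2) (by norm_num) |>.mp h0)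
  -- the main equivalence
  have main : ∀ z : K, z ^ (m - 2) + (z + A) ^ (m - 2) = 0 ↔
      (z ≠ 0 ∧ ∃ θ : K, θ ^ k = 1 ∧ θ ≠ 1 ∧ z = A / (1 + θ)) := by
    intro z
    constructor
    · intro h
      have hz : z ≠ 0 := by
        rintro rfl
        rw [zero_pow (by omega), zero_add, zero_add] at h
        exact hA (pow_eq_zero_iff (by omega) |>.mp h)
      have heq : z ^ (m - 2) = (z + A) ^ (m - 2) := (char2_add _ _).mp h
      rw [hmk, mul_comm, pow_mul, pow_mul] at heq
      have heq2 : z ^ k = (z + A) ^ k := sq_inj _ _ heq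
      refine ⟨hz, (z + A) / z, ?_, ?_, ?_⟩
      · rw [div_pow, ← heq2, div_self (pow_ne_zero _ hz)]
      · intro h1
        rw [div_eq_one_iff_eq hz] at h1
        exact hA (by linear_combination h1)
      · have h1θ : 1 + (z + A) / z = A / z := by
          rw [one_add_div hz, div_left_inj' hz]
          linear_combination z * htwo
        have hne : (1 : K) + (z + A) / z ≠ 0 := by
          rw [h1θ]; exact div_ne_zero hA hz
        rw [eq_div_iff hne, h1θ]
        rw [mul_comm, div_mul_cancel₀ A hz]
    · rintro ⟨hz, θ, hθk, hθ1, hzθ⟩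
      have h1θ : (1 : K) + θ ≠ 0 := by
        intro h
        exact hθ1 ((char2_add 1 θ).mp h).symm
      have hzA : z * (1 + θ) = A := by
        rw [hzθ]; exact div_mul_cancel₀ A h1θ
      have hsum : z + A = z * θ := by
        rw [← hzA]; linear_combination z * htwo
      rw [hsum, hmk]
      have hθ2k : θ ^ (2 * k) = 1 := by rw [mul_comm, pow_mul, hθk, one_pow]
      rw [mul_pow, hθ2k, mul_one]
      linear_combination (z ^ (2 * k)) * htwo
  constructor
  · intro z
    rw [main z]
  · -- cardinality
    obtain ⟨ζ, hζ⟩ : ∃ ζ : K, IsPrimitiveRoot ζ k := by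
      haveI : NeZero ((k : K)) := ⟨by
        rw [Ne, CharP.cast_eq_zero_iff K 2 k]
        exact hkodd⟩
      exact HasEnoughRootsOfUnity.exists_primitiveRoot K k
    have hS : {z : K | z ^ (m - 2) + (z + A) ^ (m - 2) = 0} =
        (fun θ : K => A / (1 + θ)) '' (((nthRootsFinset k (1 : K)).erase 1 : Finset K) : Set K) := by
      ext z
      simp only [Set.mem_setOf_eq, main z, Set.mem_image, Finset.coe_erase,
        Set.mem_diff, Finset.mem_coe, mem_nthRootsFinset hkpos, Set.mem_singleton_iff]
      constructor
      · rintro ⟨hz, θ, hθk, hθ1, rfl⟩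
        exact ⟨θ, ⟨hθk, hθ1⟩, rfl⟩
      · rintro ⟨θ, ⟨hθk, hθ1⟩, rfl⟩
        have h1θ : (1 : K) + θ ≠ 0 := by
          intro h
          exact hθ1 ((char2_add 1 θ).mp h).symm
        exact ⟨div_ne_zero hA h1θ, θ, hθk, hθ1, rfl⟩
    have hinj : Set.InjOn (fun θ : K => A / (1 + θ))
        ((((nthRootsFinset k (1 : K)).erase 1 : Finset K) : Set K)) := by
      intro θ1 h1 θ2 h2 he
      simp only [Finset.coe_erase, Set.mem_diff, Finset.mem_coe,
        mem_nthRootsFinset hkpos, Set.mem_singleton_iff] at h1 h2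
      have h1θ1 : (1 : K) + θ1 ≠ 0 := fun h => h1.2 ((char2_add 1 θ1).mp h).symm
      have h1θ2 : (1 : K) + θ2 ≠ 0 := fun h => h2.2 ((char2_add 1 θ2).mp h).symm
      have hmul : A * (1 + θ2) = A * (1 + θ1) := by
        rw [div_eq_div_iff h1θ1 h1θ2] at he
        exact he
      have := mul_left_cancel₀ hA hmul
      linear_combination -this
    rw [hS, Set.ncard_image_of_injOn hinj, Set.ncard_coe_finset,
      Finset.card_erase_of_mem (by rw [mem_nthRootsFinset hkpos]; exact one_pow k),
      hζ.card_nthRootsFinset]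
    omega
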